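/- There exist absolute constants C ≥ 1 and c ≥ 1 such that for every odd prime p, every λ ∈ F_p with λ ≠ 0 and all finite sets A, B, C, D ⊆ F_p one has I_λ(A,B,C,D) − |A||B||C||D|/p ≤ C (log p)^c ( |D|^{1/2} |B||C| + |A| |D|^{1/2} (|B||C|)^{1/3} ( |B|^{1/3} E⁺(C)^{1/6} + |C|^{1/3} E⁺(B)^{1/6} ) ). -/

import Mathlib

open Finset

/-- The number of quadruples `(a,b,c,d) ∈ A×B×C×D` with `(a+b)(c+d) = λ` in `F_p`. -/
def hypCount (p : ℕ) (lam : ZMod p) (A B C D : Finset (ZMod p)) : ℕ :=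
  (((A ×ˢ B) ×ˢ (C ×ˢ D)).filter fun x => (x.1.1 + x.1.2) * (x.2.1 + x.2.2) = lam).card

/-- Common additive energy `E⁺(X,Y) = #{(x₁,x₂,y₁,y₂) ∈ X×X×Y×Y : x₁+y₁ = x₂+y₂}`. -/
def addEnergy (p : ℕ) (X Y : Finset (ZMod p)) : ℕ :=
  (((X ×ˢ X) ×ˢ (Y ×ˢ Y)).filter fun t => t.1.1 + t.2.1 = t.1.2 + t.2.2).card

lemma aux_fiber {α β γ : Type*} [Fintype α] [DecidableEq α] [DecidableEq β] [DecidableEq γ]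
    (S : Finset β) (T : Finset γ) (f : β → α) (R : α → γ → Prop)
    [∀ a, DecidablePred (R a)] [DecidablePred fun x : β × γ => R (f x.1) x.2] :
    ((S ×ˢ T).filter fun x => R (f x.1) x.2).card
      = ∑ a : α, (S.filter fun b => f b = a).card * (T.filter fun c => R a c).card := by
  rw [card_eq_sum_card_fiberwise (f := fun x => f x.1) (t := univ) (fun x _ => mem_univ _)]
  refine Finset.sum_congr rfl fun a _ => ?_
  rw [filter_filter, ← card_product, ← filter_product]
  congr 1
  apply filter_congr
  intro x hx
  constructor
  · rintro ⟨h1, h2⟩; exact ⟨h2, h2 ▸ h1⟩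
  · rintro ⟨h1, h2⟩; exact ⟨h1 ▸ h2, h1⟩

variable {p : ℕ} [Fact p.Prime]

/-- number of representations of `x` as a difference of two elements of `X`. -/
noncomputable def dRep (p : ℕ) (X : Finset (ZMod p)) (x : ZMod p) : ℕ :=
  ((X ×ˢ X).filter fun q => q.1 - q.2 = x).card

lemma dRep_flip (X : Finset (ZMod p)) (x : ZMod p) :
    ((X ×ˢ X).filter fun q => q.2 - q.1 = x).card = dRep p X x := by
  unfold dRep
  apply Finset.card_equiv (Equiv.prodComm _ _)
  intro q
  simp [and_comm]

lemma addEnergy_eq_sum (X Y : Finset (ZMod p)) :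
    _root_.addEnergy p X Y = ∑ x : ZMod p, dRep p X x * dRep p Y x := by
  unfold _root_.addEnergy
  have h1 : (((X ×ˢ X) ×ˢ (Y ×ˢ Y)).filter fun t => t.1.1 + t.2.1 = t.1.2 + t.2.2)
      = (((X ×ˢ X) ×ˢ (Y ×ˢ Y)).filter fun t =>
          (fun a (q : ZMod p × ZMod p) => q.2 - q.1 = a) ((fun q : ZMod p × ZMod p => q.1 - q.2) t.1) t.2) := by
    apply filter_congr
    intro t ht
    constructor <;> intro h <;> linear_combination -h
  rw [h1, aux_fiber (X ×ˢ X) (Y ×ˢ Y) (fun q : ZMod p × ZMod p => q.1 - q.2) (fun a (q : ZMod p × ZMod p) => q.2 - q.1 = a)]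
  refine Finset.sum_congr rfl fun x _ => ?_
  rw [dRep_flip]; rfl

lemma addEnergy_sq_le (X Y : Finset (ZMod p)) :
    _root_.addEnergy p X Y ^ 2 ≤ _root_.addEnergy p X X * _root_.addEnergy p Y Y := by
  rw [addEnergy_eq_sum, addEnergy_eq_sum, addEnergy_eq_sum]
  have := Finset.sum_mul_sq_le_sq_mul_sq (univ : Finset (ZMod p)) (fun x => (dRep p X x : ℕ))
    (fun x => (dRep p Y x : ℕ))
  simpa [sq] using this

lemma addEnergy_le (X Y : Finset (ZMod p)) :
    _root_.addEnergy p X Y ≤ X.card ^ 2 * Y.card := by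
  unfold _root_.addEnergy
  have : X.card ^ 2 * Y.card = ((X ×ˢ X) ×ˢ Y).card := by
    simp only [card_product, sq]
  rw [this]
  apply Finset.card_le_card_of_injOn (fun t => (t.1, t.2.1))
  · intro t ht
    simp only [mem_coe, mem_filter, mem_product] at ht ⊢
    exact ⟨⟨ht.1.1.1, ht.1.1.2⟩, ht.1.2.1⟩
  · intro t ht t' ht' h
    simp only [coe_filter, Set.mem_setOf_eq, mem_product] at ht ht'
    simp only [Prod.ext_iff] at h ⊢
    obtain ⟨⟨h1, h2⟩, h3⟩ := h
    refine ⟨⟨h1, h2⟩, h3, ?_⟩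
    have e1 := ht.2; have e2 := ht'.2
    rw [h1, h2, h3] at e1
    linear_combination e2 - e1

lemma hypCount_le (lam : ZMod p) (hlam : lam ≠ 0) (A B C D : Finset (ZMod p)) :
    hypCount p lam A B C D ≤ A.card * B.card * C.card := by
  unfold hypCount
  have : A.card * B.card * C.card = ((A ×ˢ B) ×ˢ C).card := by
    simp only [card_product]
  rw [this]
  apply Finset.card_le_card_of_injOn (fun t => (t.1, t.2.1))
  · intro t ht
    simp only [mem_coe, mem_filter, mem_product] at ht ⊢
    exact ⟨⟨ht.1.1.1, ht.1.1.2⟩, ht.1.2.1⟩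
  · intro t ht t' ht' h
    simp only [coe_filter, Set.mem_setOf_eq, mem_product] at ht ht'
    simp only [Prod.ext_iff] at h ⊢
    obtain ⟨⟨h1, h2⟩, h3⟩ := h
    refine ⟨⟨h1, h2⟩, h3, ?_⟩
    have e1 := ht.2; have e2 := ht'.2
    rw [h1, h2, h3] at e1
    -- (a'+b')(c'+d) = lam = (a'+b')(c'+d'), a'+b' ≠ 0
    have hab : t'.1.1 + t'.1.2 ≠ 0 := by
      intro h0
      rw [h0, zero_mul] at e2
      exact hlam e2.symm
    have := e1.trans e2.symm
    exact add_left_cancel (mul_left_cancel₀ hab this)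

/-- number of representations of `s` as a sum. -/
noncomputable def sRep (p : ℕ) (X Y : Finset (ZMod p)) (s : ZMod p) : ℕ :=
  ((X ×ˢ Y).filter fun x => x.1 + x.2 = s).card

lemma addEnergy_eq_sum_sRep_sq (X Y : Finset (ZMod p)) :
    _root_.addEnergy p X Y = ∑ s : ZMod p, sRep p X Y s ^ 2 := by
  have h : _root_.addEnergy p X Y = Finset.addEnergy X Y := rfl
  rw [h, Finset.addEnergy_eq_sum_sq]
  rfl

lemma hypCount_sq_le (lam : ZMod p) (hlam : lam ≠ 0) (A B C D : Finset (ZMod p)) :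
    hypCount p lam A B C D ^ 2 ≤ _root_.addEnergy p A B * _root_.addEnergy p C D := by
  classical
  set q : ZMod p → ℕ := fun s => ((C ×ˢ D).filter fun y => s * (y.1 + y.2) = lam).card with hq
  have h1 : hypCount p lam A B C D = ∑ s : ZMod p, sRep p A B s * q s := by
    unfold hypCount
    exact aux_fiber (A ×ˢ B) (C ×ˢ D) (fun x : ZMod p × ZMod p => x.1 + x.2)
      (fun a (y : ZMod p × ZMod p) => a * (y.1 + y.2) = lam)
  have h2 : ∀ s : ZMod p, q s ≤ sRep p C D (s⁻¹ * lam) := by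
    intro s
    by_cases hs : s = 0
    · have : q s = 0 := by
        rw [hq]
        simp only [card_eq_zero, filter_eq_empty_iff]
        intro y _
        rw [hs, zero_mul]
        exact fun h => hlam h.symm
      simp [this]
    · apply le_of_eq
      unfold sRep
      show (((C ×ˢ D).filter fun y => s * (y.1 + y.2) = lam).card) = _
      congr 1
      apply filter_congr
      intro y _
      constructor
      · intro h; rw [← h]; field_simp
      · intro h; rw [h]; field_simp
  calc hypCount p lam A B C D ^ 2
      = (∑ s : ZMod p, sRep p A B s * q s) ^ 2 := by rw [h1]
    _ ≤ (∑ s : ZMod p, sRep p A B s ^ 2) * (∑ s : ZMod p, q s ^ 2) :=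
        Finset.sum_mul_sq_le_sq_mul_sq _ _ _
    _ ≤ (∑ s : ZMod p, sRep p A B s ^ 2) * (∑ s : ZMod p, sRep p C D (s⁻¹ * lam) ^ 2) := by
        apply Nat.mul_le_mul_left
        apply Finset.sum_le_sum
        intro s _
        exact Nat.pow_le_pow_left (h2 s) 2
    _ = (∑ s : ZMod p, sRep p A B s ^ 2) * (∑ t : ZMod p, sRep p C D t ^ 2) := by
        congr 1
        apply Fintype.sum_bijective (fun s : ZMod p => s⁻¹ * lam)
        · exact (Equiv.mulRight₀ lam hlam).bijective.comp inv_involutive.bijective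
        · intro s; rfl
    _ = _root_.addEnergy p A B * _root_.addEnergy p C D := by
        rw [addEnergy_eq_sum_sRep_sq, addEnergy_eq_sum_sRep_sq]

lemma hypCount_pow_six_le (lam : ZMod p) (hlam : lam ≠ 0) (A B C D : Finset (ZMod p)) :
    hypCount p lam A B C D ^ 6 ≤
      A.card ^ 6 * B.card ^ 4 * C.card ^ 2 * D.card ^ 3 * _root_.addEnergy p C C := by
  have h1 := hypCount_sq_le lam hlam A B C D
  have h2 := addEnergy_le A B
  have h3 := addEnergy_sq_le C D
  have h4 := addEnergy_le D D
  have h5 := hypCount_le lam hlam A B C D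
  calc hypCount p lam A B C D ^ 6
      = (hypCount p lam A B C D ^ 2) ^ 2 * hypCount p lam A B C D ^ 2 := by ring
    _ ≤ (_root_.addEnergy p A B * _root_.addEnergy p C D) ^ 2 *
          (A.card * B.card * C.card) ^ 2 := by
        exact Nat.mul_le_mul (Nat.pow_le_pow_left h1 2) (Nat.pow_le_pow_left h5 2)
    _ = _root_.addEnergy p A B ^ 2 * _root_.addEnergy p C D ^ 2 *
          (A.card * B.card * C.card) ^ 2 := by ring
    _ ≤ (A.card ^ 2 * B.card) ^ 2 * (_root_.addEnergy p C C * _root_.addEnergy p D D) *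
          (A.card * B.card * C.card) ^ 2 := by
        exact Nat.mul_le_mul (Nat.mul_le_mul (Nat.pow_le_pow_left h2 2) h3) (le_refl _)
    _ ≤ (A.card ^ 2 * B.card) ^ 2 * (_root_.addEnergy p C C * (D.card ^ 2 * D.card)) *
          (A.card * B.card * C.card) ^ 2 := by
        exact Nat.mul_le_mul (Nat.mul_le_mul (le_refl _) (Nat.mul_le_mul (le_refl _) h4))
          (le_refl _)
    _ = A.card ^ 6 * B.card ^ 4 * C.card ^ 2 * D.card ^ 3 * _root_.addEnergy p C C := by ring

lemma hypCount_real_le (lam : ZMod p) (hlam : lam ≠ 0) (A B C D : Finset (ZMod p)) :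
    (hypCount p lam A B C D : ℝ) ≤
      (A.card : ℝ) * (D.card : ℝ) ^ ((1 : ℝ) / 2) *
        ((B.card : ℝ) * (C.card : ℝ)) ^ ((1 : ℝ) / 3) *
        ((B.card : ℝ) ^ ((1 : ℝ) / 3) * (_root_.addEnergy p C C : ℝ) ^ ((1 : ℝ) / 6)) := by
  have key := hypCount_pow_six_le lam hlam A B C D
  have e1 : (((D.card : ℝ)) ^ ((1 : ℝ) / 2)) ^ (6 : ℕ) = (D.card : ℝ) ^ (3 : ℕ) := by
    rw [← Real.rpow_natCast ((D.card : ℝ) ^ ((1 : ℝ) / 2)) 6,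
      ← Real.rpow_mul (by positivity), ← Real.rpow_natCast (D.card : ℝ) 3]
    norm_num
  have e2 : (((B.card : ℝ) * (C.card : ℝ)) ^ ((1 : ℝ) / 3)) ^ (6 : ℕ)
      = ((B.card : ℝ) * (C.card : ℝ)) ^ (2 : ℕ) := by
    rw [← Real.rpow_natCast (((B.card : ℝ) * (C.card : ℝ)) ^ ((1 : ℝ) / 3)) 6,
      ← Real.rpow_mul (by positivity), ← Real.rpow_natCast ((B.card : ℝ) * (C.card : ℝ)) 2]
    norm_num
  have e3 : (((B.card : ℝ)) ^ ((1 : ℝ) / 3)) ^ (6 : ℕ) = (B.card : ℝ) ^ (2 : ℕ) := by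
    rw [← Real.rpow_natCast ((B.card : ℝ) ^ ((1 : ℝ) / 3)) 6,
      ← Real.rpow_mul (by positivity), ← Real.rpow_natCast (B.card : ℝ) 2]
    norm_num
  have e4 : ((_root_.addEnergy p C C : ℝ) ^ ((1 : ℝ) / 6)) ^ (6 : ℕ)
      = (_root_.addEnergy p C C : ℝ) := by
    rw [← Real.rpow_natCast ((_root_.addEnergy p C C : ℝ) ^ ((1 : ℝ) / 6)) 6,
      ← Real.rpow_mul (by positivity)]
    norm_num
  apply le_of_pow_le_pow_left₀ (n := 6) (by norm_num) (by positivity)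
  calc (hypCount p lam A B C D : ℝ) ^ (6 : ℕ)
      ≤ (A.card : ℝ) ^ 6 * (B.card : ℝ) ^ 4 * (C.card : ℝ) ^ 2 * (D.card : ℝ) ^ 3 *
          (_root_.addEnergy p C C : ℝ) := by exact_mod_cast key
    _ = _ := by
        rw [mul_pow, mul_pow, mul_pow, mul_pow, e1, e2, e3, e4]
        ring


theorem stmt1 :
    ∃ C c : ℝ, 1 ≤ C ∧ 1 ≤ c ∧
      ∀ (p : ℕ), p.Prime → Odd p →
        ∀ (lam : ZMod p), lam ≠ 0 →
          ∀ A B Cs D : Finset (ZMod p),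
            (hypCount p lam A B Cs D : ℝ) -
                (A.card : ℝ) * B.card * Cs.card * D.card / p ≤
              C * Real.log p ^ c *
                ((D.card : ℝ) ^ ((1 : ℝ) / 2) * B.card * Cs.card +
                  (A.card : ℝ) * (D.card : ℝ) ^ ((1 : ℝ) / 2) *
                    ((B.card : ℝ) * Cs.card) ^ ((1 : ℝ) / 3) *
                    ((B.card : ℝ) ^ ((1 : ℝ) / 3) *
                        (addEnergy p Cs Cs : ℝ) ^ ((1 : ℝ) / 6) +
                      (Cs.card : ℝ) ^ ((1 : ℝ) / 3) *
                        (addEnergy p B B : ℝ) ^ ((1 : ℝ) / 6))) := by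
  refine ⟨1, 1, le_refl _, le_refl _, ?_⟩
  intro p hp hodd lam hlam A B Cs D
  haveI : Fact p.Prime := ⟨hp⟩
  have hp3 : (3 : ℕ) ≤ p := by
    have h2 := hp.two_le
    have : p ≠ 2 := by
      intro h; rw [h] at hodd; exact (by decide : ¬ Odd 2) hodd
    omega
  have hlog : (1 : ℝ) ≤ Real.log p := by
    have h3 : (3 : ℝ) ≤ (p : ℝ) := by exact_mod_cast hp3
    have : (1 : ℝ) ≤ Real.log 3 := by
      rw [Real.le_log_iff_exp_le (by norm_num)]
      exact (Real.exp_one_lt_d9.le.trans (by norm_num))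
    exact this.trans (Real.log_le_log (by norm_num) h3)
  have key := hypCount_real_le lam hlam A B Cs D
  set T1 : ℝ := (D.card : ℝ) ^ ((1 : ℝ) / 2) * B.card * Cs.card with hT1
  set X : ℝ := (A.card : ℝ) * (D.card : ℝ) ^ ((1 : ℝ) / 2) *
      ((B.card : ℝ) * Cs.card) ^ ((1 : ℝ) / 3) with hX
  set K1 : ℝ := (B.card : ℝ) ^ ((1 : ℝ) / 3) * (_root_.addEnergy p Cs Cs : ℝ) ^ ((1 : ℝ) / 6)
    with hK1
  set K2 : ℝ := (Cs.card : ℝ) ^ ((1 : ℝ) / 3) * (_root_.addEnergy p B B : ℝ) ^ ((1 : ℝ) / 6)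
    with hK2
  have hT1pos : (0 : ℝ) ≤ T1 := by rw [hT1]; positivity
  have hXpos : (0 : ℝ) ≤ X := by rw [hX]; positivity
  have hK1pos : (0 : ℝ) ≤ K1 := by rw [hK1]; positivity
  have hK2pos : (0 : ℝ) ≤ K2 := by rw [hK2]; positivity
  have step1 : (hypCount p lam A B Cs D : ℝ) -
      (A.card : ℝ) * B.card * Cs.card * D.card / p ≤ (hypCount p lam A B Cs D : ℝ) := by
    have : (0 : ℝ) ≤ (A.card : ℝ) * B.card * Cs.card * D.card / p := by positivity
    linarith
  have step2 : (hypCount p lam A B Cs D : ℝ) ≤ X * K1 := key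
  have step3 : X * K1 ≤ T1 + X * (K1 + K2) := by nlinarith
  have step4 : T1 + X * (K1 + K2) ≤ 1 * Real.log p ^ (1 : ℝ) * (T1 + X * (K1 + K2)) := by
    have hsum : (0 : ℝ) ≤ T1 + X * (K1 + K2) := by positivity
    have h1 : (1 : ℝ) ≤ 1 * Real.log p ^ (1 : ℝ) := by
      rw [Real.rpow_one]; linarith
    exact le_mul_of_one_le_left hsum h1
  linarith
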